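/- If a triangulation M is non-branching, then the boundary of its boundary is empty: ∂∂M = ∅. -/

import Mathlib

/-- The boundary of a triangulation: the facets incident to exactly one element. -/
def triBdry {V : Type*} (M : Set (Finset V)) : Set (Finset V) :=
  {F | ∃! K, K ∈ M ∧ F ⊆ K ∧ F.card + 1 = K.card}
/-- If an `n`-dimensional triangulation `M` (`n ≥ 1`) is non-branching
(every facet is incident to at most two elements), then the boundary of its boundary is
empty: `∂∂M = ∅`. -/
theorem stmt2 {V : Type*} {n : ℕ} (hn : 1 ≤ n) (M : Set (Finset V)) (hfin : M.Finite)
    (hcard : ∀ K ∈ M, K.card = n + 1)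
    (hnb : ∀ F : Finset V, {K | K ∈ M ∧ F ⊆ K ∧ F.card + 1 = K.card}.encard ≤ 2) :
    triBdry (triBdry M) = ∅ := by
  classical
  ext G
  simp only [Set.mem_empty_iff_false, iff_false]
  rintro ⟨F₀, ⟨hF₀bd, hGF₀, hcardG⟩, huniq⟩
  obtain ⟨K₀, ⟨hK₀M, hF₀K₀, hcardF₀⟩, huniqK⟩ := hF₀bd
  have hK₀card := hcard K₀ hK₀M
  have hGn : G.card + 2 = n + 1 := by omega
  set MF := hfin.toFinset with hMF
  have hMFmem : ∀ K, K ∈ MF ↔ K ∈ M := fun K => hfin.mem_toFinset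
  set 𝒦 : Finset (Finset V) := MF.filter (fun K => G ⊆ K) with h𝒦
  have h𝒦mem : ∀ K, K ∈ 𝒦 ↔ K ∈ M ∧ G ⊆ K := by
    intro K; simp [h𝒦, hMFmem]
  set 𝒜 : Finset (Finset V) := (𝒦.biUnion Finset.powerset).filter
      (fun F => G ⊆ F ∧ F.card = G.card + 1) with h𝒜
  have h𝒜mem : ∀ F, F ∈ 𝒜 ↔ (∃ K ∈ 𝒦, F ⊆ K) ∧ G ⊆ F ∧ F.card = G.card + 1 := by
    intro F; simp [h𝒜]
  -- the degree-set of F ∈ 𝒜 as a finset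
  have hdegset : ∀ F ∈ 𝒜,
      {K | K ∈ M ∧ F ⊆ K ∧ F.card + 1 = K.card} = ↑(𝒦.filter (fun K => F ⊆ K)) := by
    intro F hF
    obtain ⟨-, hGF, hFc⟩ := (h𝒜mem F).1 hF
    ext K
    simp only [Set.mem_setOf_eq, Finset.coe_filter, Set.mem_setOf_eq, h𝒦mem]
    constructor
    · rintro ⟨hKM, hFK, -⟩
      exact ⟨⟨hKM, hGF.trans hFK⟩, hFK⟩
    · rintro ⟨⟨hKM, -⟩, hFK⟩
      have := hcard K hKM
      exact ⟨hKM, hFK, by omega⟩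
  have hdeg2 : ∀ F ∈ 𝒜, (𝒦.filter (fun K => F ⊆ K)).card ≤ 2 := by
    intro F hF
    have h := hnb F
    rw [hdegset F hF, Set.encard_coe_eq_coe_finsetCard] at h
    exact_mod_cast h
  have hF₀A : F₀ ∈ 𝒜 := by
    rw [h𝒜mem]
    exact ⟨⟨K₀, (h𝒦mem K₀).2 ⟨hK₀M, hGF₀.trans hF₀K₀⟩, hF₀K₀⟩, hGF₀, hcardG.symm⟩
  -- F ∈ 𝒜 has degree 1 iff F = F₀
  have hdeg1 : ∀ F ∈ 𝒜, ((𝒦.filter (fun K => F ⊆ K)).card = 1 ↔ F = F₀) := by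
    intro F hF
    obtain ⟨-, hGF, hFc⟩ := (h𝒜mem F).1 hF
    constructor
    · intro h1
      obtain ⟨K, hK⟩ := Finset.card_eq_one.1 h1
      have hset : {K' | K' ∈ M ∧ F ⊆ K' ∧ F.card + 1 = K'.card} = {K} := by
        rw [hdegset F hF, hK]; simp
      have hbd : F ∈ triBdry M := by
        refine ⟨K, ?_, ?_⟩
        · have : K ∈ ({K} : Set (Finset V)) := rfl
          rw [← hset] at this; exact this
        · intro y hy
          have : y ∈ ({K} : Set (Finset V)) := by rw [← hset]; exact hy
          exact this
      exact huniq F ⟨hbd, hGF, hFc.symm⟩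
    · intro hEq
      rw [hEq]
      have hset : {K' | K' ∈ M ∧ F₀ ⊆ K' ∧ F₀.card + 1 = K'.card} = {K₀} := by
        ext K'
        constructor
        · intro h; exact huniqK K' h
        · rintro rfl; exact ⟨hK₀M, hF₀K₀, hcardF₀⟩
      have : ↑(𝒦.filter (fun K => F₀ ⊆ K)) = ({K₀} : Set (Finset V)) := by
        rw [← hdegset F₀ hF₀A, hset]
      have := Finset.coe_eq_singleton.1 this
      rw [this]; simp
  -- double counting
  have hsum : ∑ F ∈ 𝒜, (𝒦.filter (fun K => F ⊆ K)).card
      = ∑ K ∈ 𝒦, (𝒜.filter (fun F => F ⊆ K)).card := by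
    simp_rw [Finset.card_filter]
    exact Finset.sum_comm
  -- each K ∈ 𝒦 contains exactly two F's
  have hfib : ∀ K ∈ 𝒦, (𝒜.filter (fun F => F ⊆ K)).card = 2 := by
    intro K hK
    obtain ⟨hKM, hGK⟩ := (h𝒦mem K).1 hK
    have hKc := hcard K hKM
    have himg : 𝒜.filter (fun F => F ⊆ K) = (K \ G).image (fun a => insert a G) := by
      ext F
      simp only [Finset.mem_filter, Finset.mem_image, Finset.mem_sdiff]
      constructor
      · rintro ⟨hFA, hFK⟩
        obtain ⟨-, hGF, hFc⟩ := (h𝒜mem F).1 hFA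
        have hcardFG : (F \ G).card = 1 := by
          rw [Finset.card_sdiff_of_subset hGF]; omega
        obtain ⟨a, ha⟩ := Finset.card_eq_one.1 hcardFG
        have haF : a ∈ F \ G := by rw [ha]; simp
        refine ⟨a, ⟨hFK (Finset.mem_sdiff.1 haF).1, (Finset.mem_sdiff.1 haF).2⟩, ?_⟩
        have : G ∪ F \ G = F := Finset.union_sdiff_of_subset hGF
        rw [ha] at this
        rw [← this]
        rw [Finset.insert_eq, Finset.union_comm]
      · rintro ⟨a, ⟨haK, haG⟩, rfl⟩
        refine ⟨(h𝒜mem _).2 ⟨⟨K, hK, ?_⟩, ?_, ?_⟩, ?_⟩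
        · exact Finset.insert_subset haK hGK
        · exact Finset.subset_insert _ _
        · exact Finset.card_insert_of_notMem haG
        · exact Finset.insert_subset haK hGK
    rw [himg, Finset.card_image_of_injOn, Finset.card_sdiff_of_subset hGK]
    · omega
    · intro a ha b hb hab
      have hab' : insert a G = insert b G := hab
      have haG : a ∉ G := (Finset.mem_sdiff.1 (Finset.mem_coe.1 ha)).2
      have : a ∈ insert b G := by rw [← hab']; exact Finset.mem_insert_self a G
      rcases Finset.mem_insert.1 this with h | h
      · exact h
      · exact absurd h haG
  have hRHS : ∑ K ∈ 𝒦, (𝒜.filter (fun F => F ⊆ K)).card = 2 * 𝒦.card := by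
    rw [Finset.sum_congr rfl hfib]
    simp [Nat.mul_comm]
  -- parity of the left-hand side
  have hmod : (∑ F ∈ 𝒜, (𝒦.filter (fun K => F ⊆ K)).card) % 2 = 1 := by
    rw [Finset.sum_nat_mod]
    have : ∀ F ∈ 𝒜, (𝒦.filter (fun K => F ⊆ K)).card % 2
        = if F = F₀ then 1 else 0 := by
      intro F hF
      have h2 := hdeg2 F hF
      have h1 := hdeg1 F hF
      by_cases hEq : F = F₀
      · have h1' : (𝒦.filter (fun K => F ⊆ K)).card = 1 := h1.2 hEq
        simp only [hEq] at h1' ⊢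
        simp only [if_true]
        omega
      · have h1' : (𝒦.filter (fun K => F ⊆ K)).card ≠ 1 := fun h => hEq (h1.1 h)
        simp only [hEq, if_false]
        omega
    rw [Finset.sum_congr rfl this, Finset.sum_ite_eq' 𝒜 F₀ (fun _ => 1)]
    simp [hF₀A]
  rw [hsum, hRHS] at hmod
  omega
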